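/- Let F be a 2-connected graph on r vertices with s edges, and let H_F be an F-graph whose underlying multi-hypergraph Ĥ_F contains no avoidable configuration (connected subhypergraph with nullity ≥ 2 and at most 2·C(r,2) hyperedges). Suppose F_0 is a copy of F contained in G(H_F) but not present as an F-edge of H_F. Then Ĥ_F contains a clean k-cycle H for some 2 ≤ k ≤ s such that every edge of F_0 lies inside some hyperedge of H. -/

import Mathlib

/-- `E` is (the edge set of) a copy of the graph `F` on the vertex type `V`: the image of
the edges of `F` under an injection of the vertices. -/
def IsCopy {α V : Type*} (F : SimpleGraph α) (E : Finset (Sym2 V)) : Prop :=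
  ∃ φ : α ↪ V, (↑E : Set (Sym2 V)) = Sym2.map φ '' F.edgeSet

/-- The set of vertices spanned by a finite set of graph edges. -/
def vertsOf {V : Type*} [DecidableEq V] (E : Finset (Sym2 V)) : Finset V :=
  E.sup fun e => Sym2.lift ⟨fun a b => ({a, b} : Finset V), fun a b => Finset.pair_comm a b⟩ e

/-- `F` is 2-connected: at least 3 vertices and removing any single vertex leaves a
connected graph. -/
def TwoConnected {α : Type*} [Fintype α] (F : SimpleGraph α) : Prop :=
  3 ≤ Fintype.card α ∧ ∀ v : α, (F.induce ({v}ᶜ : Set α)).Connected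

/-- A clean `k`-cycle (`k ≥ 2`) of `r`-uniform hyperedges: formed from a graph `k`-cycle
`c 0, c 1, …` by adding `r - 2` new vertices to each edge, all distinct (for `k = 2` this
means two hyperedges sharing exactly two vertices). -/
def IsCleanCycle {V : Type*} [DecidableEq V] (r k : ℕ) (C : Finset (Finset V)) : Prop :=
  ∃ (c : Fin k → V) (ext : Fin k → Finset V),
    Function.Injective c ∧ (∀ i, (ext i).card = r - 2) ∧
    (∀ i j, i ≠ j → Disjoint (ext i) (ext j)) ∧
    (∀ i j, c i ∉ ext j) ∧
    C = Finset.image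
      (fun i : Fin k =>
        insert (c i) (insert (c ⟨((i : ℕ) + 1) % k, Nat.mod_lt _ i.pos⟩) (ext i)))
      Finset.univ

/-- Connectivity of a configuration of hyperedges (each hyperedge being the vertex set of
a copy, i.e. `vertsOf E`): any two spanned vertices are joined by a chain of copies. -/
def ConfigConnected {V : Type*} [DecidableEq V] (𝒮 : Finset (Finset (Sym2 V))) : Prop :=
  ∀ u ∈ 𝒮.sup vertsOf, ∀ v ∈ 𝒮.sup vertsOf,
    Relation.ReflTransGen (fun x y => ∃ E ∈ 𝒮, x ∈ vertsOf E ∧ y ∈ vertsOf E) u v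

/-- The multi-hypergraph underlying the `F`-graph `𝓕` (one hyperedge, the vertex set, per
copy) contains no avoidable configuration: no nonempty connected subfamily `𝒮` with at
most `2·C(r,2)` hyperedges and nullity `(r-1)e + 1 - |V| ≥ 2`. -/
def NoAvoidableConfig {V : Type*} [DecidableEq V] (r : ℕ)
    (𝓕 : Finset (Finset (Sym2 V))) : Prop :=
  ¬ ∃ 𝒮 ⊆ 𝓕, 𝒮.Nonempty ∧ ConfigConnected 𝒮 ∧ 𝒮.card ≤ 2 * r.choose 2 ∧
      2 ≤ ((r : ℤ) - 1) * 𝒮.card + 1 - (𝒮.sup vertsOf).card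

section Helpers

open Finset

lemma st14_dcount {β : Type*} [DecidableEq β] {m : ℕ} (D : Fin m → Finset β) (s : Finset β) :
    ∑ i, (D i ∩ s).card = ∑ a ∈ s, (Finset.univ.filter (fun i => a ∈ D i)).card := by
  have h1 : ∀ i, (D i ∩ s).card = ∑ a ∈ s, if a ∈ D i then 1 else 0 := by
    intro i
    rw [Finset.inter_comm, ← Finset.filter_mem_eq_inter, Finset.card_filter]
  have h2 : ∀ a, (Finset.univ.filter (fun i => a ∈ D i)).card = ∑ i, if a ∈ D i then 1 else 0 := by
    intro a; rw [Finset.card_filter]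
  simp_rw [h1, h2]
  exact Finset.sum_comm

lemma st14_forced_eq {ι : Type*} (s : Finset ι) (f : ι → ℕ) (c : ℕ) (hle : ∀ i ∈ s, c ≤ f i)
    (htot : ∑ i ∈ s, f i = s.card * c) : ∀ i ∈ s, f i = c := by
  by_contra hcon
  push_neg at hcon
  obtain ⟨i₀, hi₀, hne⟩ := hcon
  have hlt : ∑ i ∈ s, (fun _ => c) i < ∑ i ∈ s, f i :=
    Finset.sum_lt_sum hle ⟨i₀, hi₀, lt_of_le_of_ne (hle _ hi₀) (Ne.symm hne)⟩
  simp only [Finset.sum_const, smul_eq_mul] at hlt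
  omega

lemma st14_disj_of_card {β : Type*} [DecidableEq β] {m : ℕ} (B : Fin m → Finset β)
    (h : (Finset.univ.biUnion B).card = ∑ i, (B i).card) :
    ∀ i j, i ≠ j → Disjoint (B i) (B j) := by
  classical
  set U := Finset.univ.biUnion B with hU
  have hsub : ∀ i, B i ∩ U = B i := by
    intro i
    apply Finset.inter_eq_left.mpr
    intro a ha
    exact Finset.mem_biUnion.mpr ⟨i, Finset.mem_univ i, ha⟩
  have hdc : ∑ a ∈ U, (Finset.univ.filter (fun i => a ∈ B i)).card = ∑ i, (B i).card := by
    rw [← st14_dcount B U]; simp_rw [hsub]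
  have hone : ∀ a ∈ U, (Finset.univ.filter (fun i => a ∈ B i)).card = 1 := by
    apply st14_forced_eq
    · intro a ha
      obtain ⟨i, _, hi⟩ := Finset.mem_biUnion.mp ha
      exact Finset.card_pos.mpr ⟨i, Finset.mem_filter.mpr ⟨Finset.mem_univ i, hi⟩⟩
    · rw [hdc, ← h, mul_one]
  intro i j hij
  rw [Finset.disjoint_left]
  intro a hai haj
  have haU : a ∈ U := Finset.mem_biUnion.mpr ⟨i, Finset.mem_univ i, hai⟩
  have h2 : 2 ≤ (Finset.univ.filter (fun l => a ∈ B l)).card := by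
    apply Finset.one_lt_card.mpr
    exact ⟨i, Finset.mem_filter.mpr ⟨Finset.mem_univ _, hai⟩,
      j, Finset.mem_filter.mpr ⟨Finset.mem_univ _, haj⟩, hij⟩
  have := hone a haU
  omega

lemma st14_rtg_or {ι : Type*} {R R' : ι → ι → Prop} (h : ∀ i j, R i j → i = j ∨ R' i j) {i j : ι}
    (hr : Relation.ReflTransGen R i j) : Relation.ReflTransGen R' i j := by
  induction hr with
  | refl => exact .refl
  | tail _ hstep ih =>
    rcases h _ _ hstep with rfl | hs
    · exact ih
    · exact ih.tail hs

lemma st14_third_elem {α : Type*} [Fintype α] (h3 : 3 ≤ Fintype.card α) (a v : α) :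
    ∃ w, w ≠ a ∧ w ≠ v := by
  classical
  have h2 : ({a, v} : Finset α).card ≤ 2 := le_trans (card_insert_le _ _) (by simp)
  have : (Finset.univ \ {a, v}).Nonempty := by
    rw [← Finset.card_pos, Finset.card_sdiff_of_subset (Finset.subset_univ _), Finset.card_univ]
    omega
  obtain ⟨w, hw⟩ := this
  simp only [Finset.mem_sdiff, Finset.mem_insert, Finset.mem_singleton] at hw
  exact ⟨w, by tauto, by tauto⟩

lemma st14_mindeg {α : Type*} [Fintype α] {F : SimpleGraph α} (hF : TwoConnected F) (a : α) :
    ∃ b, F.Adj a b := by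
  obtain ⟨h3, hconn⟩ := hF
  have : Nontrivial α := Fintype.one_lt_card_iff_nontrivial.mp (by omega)
  obtain ⟨v, hv⟩ := exists_ne a
  obtain ⟨w, hwa, hwv⟩ := st14_third_elem h3 a v
  have ha : a ∈ ({v}ᶜ : Set α) := by simpa using hv.symm
  have hw : w ∈ ({v}ᶜ : Set α) := by simpa using hwv
  have hreach := (hconn v).preconnected ⟨a, ha⟩ ⟨w, hw⟩
  rw [SimpleGraph.reachable_iff_reflTransGen] at hreach
  rcases hreach.cases_head with heq | ⟨c, hadj, _⟩
  · exact absurd (congrArg Subtype.val heq).symm hwa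
  · exact ⟨c, by simpa using hadj⟩

lemma st14_conn {α : Type*} [Fintype α] {F : SimpleGraph α} (hF : TwoConnected F) :
    F.Connected := by
  obtain ⟨h3, hconn⟩ := hF
  have : Nonempty α := Fintype.card_pos_iff.mp (by omega)
  refine ⟨fun a b => ?_⟩
  rcases eq_or_ne a b with rfl | hab
  · exact SimpleGraph.Reachable.refl _
  obtain ⟨w, hwa, hwb⟩ := st14_third_elem h3 a b
  have ha : a ∈ ({w}ᶜ : Set α) := by simpa using hwa.symm
  have hb : b ∈ ({w}ᶜ : Set α) := by simpa using hwb.symm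
  have hreach := (hconn w).preconnected ⟨a, ha⟩ ⟨b, hb⟩
  rw [SimpleGraph.reachable_iff_reflTransGen] at hreach
  rw [SimpleGraph.reachable_iff_reflTransGen]
  have lift : ∀ x y : ({w}ᶜ : Set α), Relation.ReflTransGen (F.induce ({w}ᶜ : Set α)).Adj x y →
      Relation.ReflTransGen F.Adj x.1 y.1 := by
    intro x y h
    induction h with
    | refl => exact .refl
    | tail _ hadj ih => exact ih.tail (by simpa using hadj)
  exact lift _ _ hreach

lemma st14_mem_vertsOf {V : Type*} [DecidableEq V] {E : Finset (Sym2 V)} {e : Sym2 V}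
    (he : e ∈ E) {x : V} (hx : x ∈ e) : x ∈ vertsOf E := by
  rw [vertsOf, Finset.mem_sup]
  refine ⟨e, he, ?_⟩
  induction e with
  | _ a b =>
    rw [Sym2.mem_iff] at hx
    simp [Sym2.lift_mk]
    tauto

lemma st14_copy_basic {α V : Type*} [Fintype α] [DecidableEq V] {F : SimpleGraph α}
    (hF : TwoConnected F) {E : Finset (Sym2 V)} (hE : IsCopy F E) :
    ∃ φ : α ↪ V, (∀ e, e ∈ E ↔ ∃ a b, F.Adj a b ∧ e = s(φ a, φ b)) ∧
      vertsOf E = Finset.image φ Finset.univ ∧ E.card = F.edgeSet.ncard := by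
  obtain ⟨φ, hφ⟩ := hE
  have hmem : ∀ e, e ∈ E ↔ ∃ a b, F.Adj a b ∧ e = s(φ a, φ b) := by
    intro e
    have h : e ∈ (↑E : Set (Sym2 V)) ↔ e ∈ Sym2.map φ '' F.edgeSet := by rw [hφ]
    rw [Finset.mem_coe] at h
    rw [h]
    constructor
    · rintro ⟨f, hf, rfl⟩
      induction f with
      | _ a b => exact ⟨a, b, hf, rfl⟩
    · rintro ⟨a, b, hab, rfl⟩
      exact ⟨s(a, b), hab, rfl⟩
  refine ⟨φ, hmem, ?_, ?_⟩
  · ext x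
    simp only [Finset.mem_image, Finset.mem_univ, true_and]
    constructor
    · intro hx
      rw [vertsOf, Finset.mem_sup] at hx
      obtain ⟨e, he, hxe⟩ := hx
      obtain ⟨a, b, hab, rfl⟩ := (hmem e).mp he
      simp only [Sym2.lift_mk] at hxe
      rcases Finset.mem_insert.mp hxe with rfl | hxe
      · exact ⟨a, rfl⟩
      · exact ⟨b, (Finset.mem_singleton.mp hxe).symm⟩
    · rintro ⟨a, rfl⟩
      obtain ⟨b, hab⟩ := st14_mindeg hF a
      exact st14_mem_vertsOf ((hmem _).mpr ⟨a, b, hab, rfl⟩) (by simp)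
  · rw [← Set.ncard_coe_finset, hφ,
      Set.ncard_image_of_injective _ (Sym2.map.injective φ.injective)]

open scoped Classical in
lemma st14_claim2 {α : Type*} [Fintype α] {F : SimpleGraph α} {m : ℕ} (hF : TwoConnected F)
    (hm : 2 ≤ m) (D : Fin m → Finset α)
    (hcov : ∀ a b, F.Adj a b → ∃ i, a ∈ D i ∧ b ∈ D i)
    (hedge : ∀ i, ∃ a b, F.Adj a b ∧ a ∈ D i ∧ b ∈ D i) (j : Fin m) :
    2 ≤ ((D j).filter (fun w => ∃ l, l ≠ j ∧ w ∈ D l)).card := by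
  classical
  by_contra hcon
  push_neg at hcon
  obtain ⟨a, b, hab, haj, hbj⟩ := hedge j
  have hTsub : ∃ v, v ∈ D j ∧ ∀ w, w ∈ D j → (∃ l, l ≠ j ∧ w ∈ D l) → w = v := by
    set T := (D j).filter (fun w => ∃ l, l ≠ j ∧ w ∈ D l) with hT
    rcases T.eq_empty_or_nonempty with hemp | ⟨v, hv⟩
    · refine ⟨a, haj, fun w hw hwl => absurd ?_ (Finset.notMem_empty w)⟩
      rw [← hemp]; exact Finset.mem_filter.mpr ⟨hw, hwl⟩
    · refine ⟨v, (Finset.mem_filter.mp hv).1, fun w hw hwl => ?_⟩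
      have hwT : w ∈ T := Finset.mem_filter.mpr ⟨hw, hwl⟩
      have hT1 : T.card = 1 := le_antisymm (by omega) (Finset.card_pos.mpr ⟨v, hv⟩)
      obtain ⟨u, hu⟩ := Finset.card_eq_one.mp hT1
      rw [hu, Finset.mem_singleton] at hwT hv
      rw [hwT, hv]
  obtain ⟨v, hvj, hvmax⟩ := hTsub
  have key : ∀ x, x ∈ D j → x ≠ v → ∀ z, z ∉ D j → False := by
    intro x hxj hxv z hzj
    have hzv : z ≠ v := fun h => hzj (h ▸ hvj)
    have hx : x ∈ ({v}ᶜ : Set α) := by simpa using hxv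
    have hz : z ∈ ({v}ᶜ : Set α) := by simpa using hzv
    obtain ⟨p⟩ := (hF.2 v).preconnected ⟨x, hx⟩ ⟨z, hz⟩
    obtain ⟨d, _, hd1, hd2⟩ := p.exists_boundary_dart {u : ({v}ᶜ : Set α) | ↑u ∈ D j}
      (by exact hxj) (by exact hzj)
    have hadj : F.Adj ↑d.toProd.1 ↑d.toProd.2 := d.adj
    obtain ⟨l, hl1, hl2⟩ := hcov _ _ hadj
    have hlj : l ≠ j := fun h => hd2 (h ▸ hl2)
    have := hvmax _ hd1 ⟨l, hlj, hl1⟩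
    exact d.toProd.1.2 (by simpa using this)
  by_cases hall : ∀ z, z ∈ D j
  · have : Nontrivial (Fin m) := Fin.nontrivial_iff_two_le.mpr hm
    obtain ⟨l, hl⟩ := exists_ne j
    obtain ⟨a', b', hab', hal, hbl⟩ := hedge l
    have ha' := hvmax a' (hall a') ⟨l, hl, hal⟩
    have hb' := hvmax b' (hall b') ⟨l, hl, hbl⟩
    exact hab'.ne (ha'.trans hb'.symm)
  · push_neg at hall
    obtain ⟨z, hz⟩ := hall
    rcases eq_or_ne a v with rfl | hav
    · exact key b hbj hab.ne' z hz
    · exact key a haj hav z hz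

lemma st14_walkchain {α : Type*} {F : SimpleGraph α} {m : ℕ} (D : Fin m → Finset α)
    (hcov : ∀ a b, F.Adj a b → ∃ i, a ∈ D i ∧ b ∈ D i) :
    ∀ {x y : α}, F.Walk x y → ∀ {i j}, x ∈ D i → y ∈ D j →
      Relation.ReflTransGen (fun i j => ∃ w, w ∈ D i ∧ w ∈ D j) i j := by
  intro x y p
  induction p with
  | nil => exact fun hx hy => .single ⟨_, hx, hy⟩
  | cons hadj q ih =>
    intro i j hx hy
    obtain ⟨l, h1, h2⟩ := hcov _ _ hadj
    exact Relation.ReflTransGen.head ⟨_, hx, h1⟩ (ih h2 hy)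

lemma st14_partconn {α : Type*} {F : SimpleGraph α} (hFc : F.Connected) {m : ℕ}
    (D : Fin m → Finset α)
    (hcov : ∀ a b, F.Adj a b → ∃ i, a ∈ D i ∧ b ∈ D i)
    (hne : ∀ i, (D i).Nonempty) (i j : Fin m) :
    Relation.ReflTransGen (fun i j => ∃ w, w ∈ D i ∧ w ∈ D j) i j := by
  obtain ⟨x, hx⟩ := hne i
  obtain ⟨y, hy⟩ := hne j
  obtain ⟨p⟩ := hFc.preconnected x y
  exact st14_walkchain D hcov p hx hy

lemma st14_fin_add_one_val {m : ℕ} [NeZero m] (hm : 2 ≤ m) (t : Fin m) :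
    ((t + 1 : Fin m)).val = (t.val + 1) % m := by
  rw [Fin.add_def, Fin.val_one', Nat.mod_eq_of_lt (show 1 < m by omega)]

lemma st14_fin_succ_ne {m : ℕ} [NeZero m] (hm : 2 ≤ m) (t : Fin m) : t + 1 ≠ t := by
  intro h
  have hv := congrArg Fin.val h
  rw [st14_fin_add_one_val hm] at hv
  have ht := t.isLt
  rcases eq_or_ne (t.val + 1) m with he | hne
  · rw [he, Nat.mod_self] at hv
    omega
  · rw [Nat.mod_eq_of_lt (by omega)] at hv
    omega

lemma st14_insert_pair {β : Type*} [DecidableEq β] {u v : β} {s : Finset β}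
    (hu : u ∈ s) (hv : v ∈ s) : insert u (insert v (s \ {u, v})) = s := by
  ext x
  simp only [Finset.mem_insert, Finset.mem_sdiff, Finset.mem_singleton]
  constructor
  · rintro (rfl | rfl | ⟨hx, _⟩) <;> assumption
  · intro hx
    by_cases h1 : x = u
    · exact Or.inl h1
    by_cases h2 : x = v
    · exact Or.inr (Or.inl h2)
    · exact Or.inr (Or.inr ⟨hx, by tauto⟩)

end Helpers

lemma cycle_structure {β : Type*} [DecidableEq β] {m : ℕ} [NeZero m] (hm : 2 ≤ m)
    (D : Fin m → Finset β) (S : Finset β)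
    (hd2 : ∀ a ∈ S, (Finset.univ.filter (fun i => a ∈ D i)).card = 2)
    (hc2 : ∀ i, (D i ∩ S).card = 2)
    (hconn : ∀ i j, Relation.ReflTransGen (fun i j => ∃ a, a ∈ S ∧ a ∈ D i ∧ a ∈ D j) i j) :
    ∃ (q : Fin m → Fin m) (c : Fin m → β), Function.Bijective q ∧ Function.Injective c ∧
      (∀ t, c t ∈ S) ∧ ∀ t : Fin m, D (q t) ∩ S = {c t, c (t + 1)} := by
  classical
  have hm0 : 0 < m := by omega
  have hpair : ∀ i, ∃ p : β × β, p.1 ≠ p.2 ∧ D i ∩ S = {p.1, p.2} := by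
    intro i
    obtain ⟨x, y, h1, h2⟩ := Finset.card_eq_two.mp (hc2 i)
    exact ⟨(x, y), h1, h2⟩
  choose P hPne hPeq using hpair
  have hpp : ∀ a : β, ∃ p : Fin m × Fin m,
      a ∈ S → (p.1 ≠ p.2 ∧ Finset.univ.filter (fun i => a ∈ D i) = {p.1, p.2}) := by
    intro a
    by_cases ha : a ∈ S
    · obtain ⟨i, j, h1, h2⟩ := Finset.card_eq_two.mp (hd2 a ha)
      exact ⟨(i, j), fun _ => ⟨h1, h2⟩⟩
    · exact ⟨(⟨0, hm0⟩, ⟨0, hm0⟩), fun h => absurd h ha⟩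
  choose Q hQ using hpp
  have mem_pairD : ∀ i a, a ∈ D i ∩ S ↔ (a = (P i).1 ∨ a = (P i).2) := by
    intro i a; rw [hPeq i]; simp
  have mem_pairQ : ∀ a, a ∈ S → ∀ i, a ∈ D i ↔ (i = (Q a).1 ∨ i = (Q a).2) := by
    intro a ha i
    constructor
    · intro hai
      have h : i ∈ Finset.univ.filter (fun i => a ∈ D i) := by simp [hai]
      rw [(hQ a ha).2] at h; simpa using h
    · intro h
      have h' : i ∈ ({(Q a).1, (Q a).2} : Finset (Fin m)) := by simpa using h
      rw [← (hQ a ha).2] at h'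
      exact (Finset.mem_filter.mp h').2
  have uniq : ∀ a, a ∈ S → ∀ i j l : Fin m, i ≠ j → a ∈ D i → a ∈ D j → a ∈ D l →
      l = i ∨ l = j := by
    intro a ha i j l hij hi hj hl
    rw [mem_pairQ a ha] at hi hj hl
    rcases hi with rfl | rfl <;> rcases hj with rfl | rfl <;> tauto
  set oc : Fin m → β → β := fun i w => if w = (P i).1 then (P i).2 else (P i).1 with hoc
  set op : β → Fin m → Fin m := fun a i => if i = (Q a).1 then (Q a).2 else (Q a).1 with hop
  have oc_spec : ∀ i w, w ∈ D i ∩ S → (oc i w ∈ D i ∩ S ∧ oc i w ≠ w ∧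
      D i ∩ S = {w, oc i w}) := by
    intro i w hw
    rw [mem_pairD] at hw
    rcases hw with rfl | rfl
    · simp only [hoc, if_pos rfl]
      refine ⟨(mem_pairD i _).mpr (Or.inr rfl), (hPne i).symm, ?_⟩
      rw [hPeq i]
    · rcases eq_or_ne (P i).2 (P i).1 with h | h
      · exact absurd h.symm (hPne i)
      · simp only [hoc, if_neg h]
        refine ⟨(mem_pairD i _).mpr (Or.inl rfl), (hPne i), ?_⟩
        rw [hPeq i, Finset.pair_comm]
  have op_spec : ∀ a i, a ∈ S → a ∈ D i → (a ∈ D (op a i) ∧ op a i ≠ i) := by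
    intro a i ha hi
    rw [mem_pairQ a ha] at hi
    rcases hi with rfl | rfl
    · simp only [hop, if_pos rfl]
      exact ⟨(mem_pairQ a ha _).mpr (Or.inr rfl), (hQ a ha).1.symm⟩
    · rcases eq_or_ne (Q a).2 (Q a).1 with h | h
      · exact absurd h.symm (hQ a ha).1
      · simp only [hop, if_neg h]
        exact ⟨(mem_pairQ a ha _).mpr (Or.inl rfl), (hQ a ha).1⟩
  -- the traversal sequence
  set i₀ : Fin m := ⟨0, hm0⟩ with hi₀
  obtain ⟨u, hu0, husucc⟩ : ∃ u : ℕ → Fin m × β, u 0 = (i₀, (P i₀).1) ∧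
      ∀ n, u (n + 1) = (op (oc (u n).1 (u n).2) (u n).1, oc (u n).1 (u n).2) := by
    refine ⟨fun n => (fun p : Fin m × β =>
      (op (oc p.1 p.2) p.1, oc p.1 p.2))^[n] (i₀, (P i₀).1), rfl, fun n => ?_⟩
    exact Function.iterate_succ_apply' _ n _
  set I : ℕ → Fin m := fun n => (u n).1 with hI
  set Wq : ℕ → β := fun n => (u n).2 with hW
  have hI0 : I 0 = i₀ := by simp only [hI, hu0]
  have hW0 : Wq 0 = (P i₀).1 := by simp only [hW, hu0]
  have hWsucc : ∀ n, Wq (n + 1) = oc (I n) (Wq n) := by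
    intro n; simp only [hW, hI, husucc n]
  have hIsucc : ∀ n, I (n + 1) = op (Wq (n + 1)) (I n) := by
    intro n; simp only [hW, hI, husucc n]
  have inv : ∀ n, Wq n ∈ D (I n) ∩ S := by
    intro n
    induction n with
    | zero =>
      rw [hI0, hW0]
      exact (mem_pairD i₀ _).mpr (Or.inl rfl)
    | succ k ih =>
      have h1 := (oc_spec (I k) (Wq k) ih).1
      have hmem := Finset.mem_inter.mp h1
      have h2 := op_spec (oc (I k) (Wq k)) (I k) hmem.2 hmem.1
      rw [hWsucc k, hIsucc k, hWsucc k]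
      exact Finset.mem_inter.mpr ⟨h2.1, hmem.2⟩
  have hWne : ∀ n, Wq (n + 1) ≠ Wq n := by
    intro n; rw [hWsucc n]; exact (oc_spec (I n) (Wq n) (inv n)).2.1
  have hWD : ∀ n, Wq (n + 1) ∈ D (I n) ∩ S := by
    intro n; rw [hWsucc n]; exact (oc_spec (I n) (Wq n) (inv n)).1
  have hIne : ∀ n, I (n + 1) ≠ I n := by
    intro n
    rw [hIsucc n]
    have hmem := Finset.mem_inter.mp (hWD n)
    exact (op_spec _ _ hmem.2 hmem.1).2
  have pairset : ∀ n, D (I n) ∩ S = {Wq n, Wq (n + 1)} := by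
    intro n; rw [hWsucc n]; exact (oc_spec (I n) (Wq n) (inv n)).2.2
  have partsset : ∀ n, ∀ l, Wq (n + 1) ∈ D l → l = I n ∨ l = I (n + 1) := by
    intro n l hl
    have h1 := Finset.mem_inter.mp (hWD n)
    have h2 : Wq (n + 1) ∈ D (I (n + 1)) := by
      rw [hIsucc n]
      exact (op_spec _ _ h1.2 h1.1).1
    exact uniq _ h1.2 _ _ _ (Ne.symm (hIne n)) h1.1 h2 hl
  -- first repeat
  have hrep : ∃ n, 0 < n ∧ ∃ b, b < n ∧ I b = I n := by
    obtain ⟨x, y, hxy, hf⟩ := Fintype.exists_ne_map_eq_of_card_lt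
      (fun n : Fin (m + 1) => I n.val) (by simp)
    rcases lt_or_gt_of_ne hxy with h | h
    · have h' : x.val < y.val := h
      exact ⟨y.val, by omega, x.val, h', hf⟩
    · have h' : y.val < x.val := h
      exact ⟨x.val, by omega, y.val, h', hf.symm⟩
  set a := Nat.find hrep with hadef
  obtain ⟨hapos, b, hba, hIab⟩ := Nat.find_spec hrep
  have hapos : 0 < a := hapos
  have hba : b < a := hba
  have hIab : I b = I a := hIab
  have hmin : ∀ t, t < a → ¬(0 < t ∧ ∃ b, b < t ∧ I b = I t) := fun t ht => Nat.find_min hrep ht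
  have hinj : ∀ t1 t2, t1 < t2 → t2 < a → I t1 ≠ I t2 := by
    intro t1 t2 h12 h2a heq
    exact hmin t2 h2a ⟨by omega, t1, h12, heq⟩
  have hb0 : b = 0 ∧ Wq a = Wq b := by
    have hb1a : b + 1 ≠ a := by
      intro h
      exact hIne b (by rw [h]; exact hIab.symm)
    have hWa : Wq a ∈ D (I b) ∩ S := by rw [hIab]; exact inv a
    rw [pairset b] at hWa
    have ha1 : 1 ≤ a := hapos
    have hWaD : Wq a ∈ D (I (a - 1)) := by
      have h := Finset.mem_inter.mp (hWD (a - 1))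
      have h' : a - 1 + 1 = a := by omega
      rw [h'] at h
      exact h.1
    rcases Finset.mem_insert.mp hWa with hWab | hWab
    · constructor
      · by_contra hbne
        have hb1 : 1 ≤ b := by omega
        have h' : b - 1 + 1 = b := by omega
        have hps := partsset (b - 1) (I (a - 1)) (by rw [h', ← hWab]; exact hWaD)
        rw [h'] at hps
        rcases hps with h1 | h1
        · exact hinj (b - 1) (a - 1) (by omega) (by omega) h1.symm
        · rcases eq_or_ne (a - 1) b with he | hne
          · exact hb1a (by omega)
          · exact hinj b (a - 1) (by omega) (by omega) h1.symm
      · exact hWab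
    · exfalso
      rw [Finset.mem_singleton] at hWab
      have hps := partsset b (I (a - 1)) (by rw [← hWab]; exact hWaD)
      rcases hps with h1 | h1
      · rcases eq_or_ne (a - 1) b with he | hne
        · exact hb1a (by omega)
        · exact hinj b (a - 1) (by omega) (by omega) h1.symm
      · rcases eq_or_ne (a - 1) (b + 1) with he | hne
        · exact hWne (b + 1) (by rw [show b + 1 + 1 = a by omega]; exact hWab)
        · exact hinj (b + 1) (a - 1) (by omega) (by omega) h1.symm
  obtain ⟨rfl, hWa0⟩ := hb0
  have hIa0 : I a = I 0 := hIab.symm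
  -- periodicity
  have hperIW : ∀ n, I (n + a) = I n ∧ Wq (n + a) = Wq n := by
    intro n
    induction n with
    | zero => simpa using ⟨hIa0, hWa0⟩
    | succ k ih =>
      have he : k + 1 + a = (k + a) + 1 := by omega
      have hWs : Wq (k + 1 + a) = Wq (k + 1) := by
        rw [he, hWsucc (k + a), ih.1, ih.2, ← hWsucc k]
      refine ⟨?_, hWs⟩
      rw [he, hIsucc (k + a), ← he, hWs, ih.1, hIsucc k]
  -- visited parts
  set Vis : Finset (Fin m) := (Finset.range a).image I with hVis
  have hIVis : ∀ n, n < a → I n ∈ Vis :=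
    fun n hn => Finset.mem_image.mpr ⟨n, Finset.mem_range.mpr hn, rfl⟩
  have hclosed : ∀ i j : Fin m, i ∈ Vis → (∃ w, w ∈ S ∧ w ∈ D i ∧ w ∈ D j) → j ∈ Vis := by
    intro i j hi hw
    obtain ⟨w, hwS, hwi, hwj⟩ := hw
    obtain ⟨t, ht, hti⟩ := Finset.mem_image.mp hi
    rw [Finset.mem_range] at ht
    have hwt : w ∈ D (I t) ∩ S := by rw [hti]; exact Finset.mem_inter.mpr ⟨hwi, hwS⟩
    rw [pairset t] at hwt
    have hIaVis : I a ∈ Vis := by rw [hIa0]; exact hIVis 0 hapos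
    rcases Finset.mem_insert.mp hwt with hww | hww
    · rcases Nat.eq_zero_or_pos t with rfl | htpos
      · have h' : a - 1 + 1 = a := by omega
        have hps := partsset (a - 1) j (by rw [h', hWa0, ← hww]; exact hwj)
        rw [h'] at hps
        rcases hps with rfl | rfl
        · exact hIVis (a - 1) (by omega)
        · exact hIaVis
      · have h' : t - 1 + 1 = t := by omega
        have hps := partsset (t - 1) j (by rw [h', ← hww]; exact hwj)
        rw [h'] at hps
        rcases hps with rfl | rfl
        · exact hIVis (t - 1) (by omega)
        · exact hIVis t ht
    · rw [Finset.mem_singleton] at hww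
      have hps := partsset t j (by rw [← hww]; exact hwj)
      rcases hps with rfl | rfl
      · exact hIVis t ht
      · rcases eq_or_ne (t + 1) a with he | hne
        · rw [he]; exact hIaVis
        · exact hIVis (t + 1) (by omega)
  have hVisuniv : ∀ j : Fin m, j ∈ Vis := by
    intro j
    have h0 : I 0 ∈ Vis := hIVis 0 hapos
    have hc := hconn (I 0) j
    induction hc with
    | refl => exact h0
    | tail hrt hstep ih => exact hclosed _ _ ih hstep
  have ham : a = m := by
    have h1 : Vis.card ≤ a := le_trans (Finset.card_image_le) (by simp)
    have h2 : Vis = Finset.univ := Finset.eq_univ_iff_forall.mpr hVisuniv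
    have h3 : m ≤ a := by rw [← Finset.card_fin m, ← h2]; exact h1
    have h4 : a ≤ m := by
      by_contra hcon
      push_neg at hcon
      obtain ⟨x, y, hxy, hf⟩ := Fintype.exists_ne_map_eq_of_card_lt
        (fun n : Fin (m + 1) => I n.val) (by simp)
      rcases lt_or_gt_of_ne hxy with h | h
      · have h' : x.val < y.val := h
        have hy := y.isLt
        exact hinj x.val y.val h' (by omega) hf
      · have h' : y.val < x.val := h
        have hx := x.isLt
        exact hinj y.val x.val h' (by omega) hf.symm
    omega
  have hWqm : Wq m = Wq 0 := by have h := hWa0; rwa [ham] at h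
  have hIm : I m = I 0 := by have h := hIa0; rwa [ham] at h
  -- Fin arithmetic helpers
  have hval1 : (1 : Fin m).val = 1 := by
    rw [Fin.val_one']
    exact Nat.mod_eq_of_lt (by omega)
  have hsub : ∀ t : Fin m, ((t - 1 : Fin m)).val = if t.val = 0 then m - 1 else t.val - 1 := by
    intro t
    have ht := t.isLt
    have hval := congrArg Fin.val (Fin.sub_def t 1)
    simp only [hval1] at hval
    rw [hval]
    rcases eq_or_ne t.val 0 with h0 | h0
    · rw [if_pos h0, h0, Nat.add_zero, Nat.mod_eq_of_lt (by omega)]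
    · rw [if_neg h0]
      have h1 : m - 1 + t.val = (t.val - 1) + m := by omega
      rw [h1, Nat.add_mod_right, Nat.mod_eq_of_lt (by omega)]
  have haddval : ∀ t : Fin m, ((t + 1 : Fin m)).val = (t.val + 1) % m := by
    intro t
    rw [Fin.add_def, hval1]
  have hWsuccFin : ∀ t : Fin m, Wq ((t + 1 : Fin m)).val = Wq (t.val + 1) := by
    intro t
    rw [haddval t]
    have ht := t.isLt
    rcases eq_or_ne (t.val + 1) m with he | hne
    · rw [he, Nat.mod_self, ← hWqm]
    · rw [Nat.mod_eq_of_lt (by omega)]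
  have hqinj : ∀ t1 t2 : Fin m, I t1.val = I t2.val → t1 = t2 := by
    intro t1 t2 heq
    by_contra hne
    have h12 : t1.val ≠ t2.val := fun h => hne (Fin.ext h)
    have ht1 := t1.isLt
    have ht2 := t2.isLt
    rcases Nat.lt_or_ge t1.val t2.val with h | h
    · exact hinj t1.val t2.val h (by omega) heq
    · exact hinj t2.val t1.val (by omega) (by omega) heq.symm
  have hcmemD : ∀ t : Fin m, Wq t.val ∈ D (I t.val) := fun t => (Finset.mem_inter.mp (inv t.val)).1
  have hparts : ∀ t : Fin m, ∀ l, Wq t.val ∈ D l → l = I ((t - 1 : Fin m)).val ∨ l = I t.val := by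
    intro t l hl
    have ht := t.isLt
    rcases eq_or_ne t.val 0 with h0 | h0
    · have hW0a : Wq t.val = Wq m := by rw [h0, hWqm]
      have h' : m - 1 + 1 = m := by omega
      have hps := partsset (m - 1) l (by rw [h', ← hW0a]; exact hl)
      rw [h'] at hps
      rcases hps with h1 | h1
      · left; rw [h1, hsub t, if_pos h0]
      · right; rw [h1, hIm, h0]
    · have h' : t.val - 1 + 1 = t.val := by omega
      have hps := partsset (t.val - 1) l (by rw [h']; exact hl)
      rw [h'] at hps
      rcases hps with h1 | h1
      · left; rw [h1, hsub t, if_neg h0]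
      · right; exact h1
  have hcne : ∀ t : Fin m, Wq t.val ≠ Wq ((t - 1 : Fin m)).val := by
    intro t
    have ht := t.isLt
    rcases eq_or_ne t.val 0 with h0 | h0
    · rw [hsub t, if_pos h0, h0, ← hWqm]
      have h' : m - 1 + 1 = m := by omega
      rw [show m = m - 1 + 1 from h'.symm]
      exact hWne (m - 1)
    · rw [hsub t, if_neg h0]
      rw [show t.val = t.val - 1 + 1 by omega]
      exact hWne (t.val - 1)
  refine ⟨fun t => I t.val, fun t => Wq t.val, ?_, ?_, ?_, ?_⟩
  · rw [Fintype.bijective_iff_injective_and_card]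
    exact ⟨fun t1 t2 h => hqinj t1 t2 h, rfl⟩
  · intro t1 t2 heq
    have heq' : Wq t1.val = Wq t2.val := heq
    by_contra hne
    have h2 : Wq t1.val ∈ D (I t2.val) := by rw [heq']; exact hcmemD t2
    rcases hparts t1 (I t2.val) h2 with h1 | h1
    · have ht : t2 = t1 - 1 := hqinj t2 (t1 - 1) h1
      rw [ht] at heq'
      exact hcne t1 heq'
    · exact hne (hqinj t1 t2 h1.symm)
  · exact fun t => (Finset.mem_inter.mp (inv t.val)).2
  · intro t
    show D (I t.val) ∩ S = {Wq t.val, Wq ((t + 1 : Fin m)).val}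
    rw [pairset t.val, hWsuccFin t]

/-- Lemma 5.3, main case: let `F` be 2-connected with `r` vertices and `s`
edges, and `𝓕` an `F`-graph whose underlying multi-hypergraph contains no avoidable
configuration.  If `E₀` is a copy of `F` contained in the union graph of `𝓕` but not an
`F`-edge of `𝓕`, then the multi-hypergraph contains a clean `k`-cycle, `2 ≤ k ≤ s`, with
every edge of `E₀` inside some hyperedge of the cycle. -/
theorem stmt_14 {α V : Type*} [Fintype α] [DecidableEq V]
    (F : SimpleGraph α) (hF : TwoConnected F) (r s : ℕ)
    (hr : Fintype.card α = r) (hs : F.edgeSet.ncard = s)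
    (𝓕 : Finset (Finset (Sym2 V))) (hcopies : ∀ E ∈ 𝓕, IsCopy F E)
    (hav : NoAvoidableConfig r 𝓕)
    (E₀ : Finset (Sym2 V)) (hE₀ : IsCopy F E₀) (hnot : E₀ ∉ 𝓕)
    (hcover : ∀ e ∈ E₀, ∃ E ∈ 𝓕, e ∈ E) :
    ∃ k, 2 ≤ k ∧ k ≤ s ∧ ∃ C : Finset (Finset V), IsCleanCycle r k C ∧
      (∀ h ∈ C, ∃ E ∈ 𝓕, vertsOf E = h) ∧
      (∀ e ∈ E₀, ∃ h ∈ C, ∀ x, x ∈ e → x ∈ h) := by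
  classical
  have hr3 : 3 ≤ r := hr ▸ hF.1
  have hFc : F.Connected := st14_conn hF
  -- copy data for E₀
  obtain ⟨ψ, hψmem, hψverts, hψcard⟩ := st14_copy_basic hF hE₀
  have hE₀card : E₀.card = s := by rw [hψcard, hs]
  -- s ≤ C(r,2)
  have hsr : s ≤ r.choose 2 := by
    have h1 : F.edgeFinset.card = s := by
      rw [← hs, ← SimpleGraph.coe_edgeFinset, Set.ncard_coe_finset]
    rw [← h1, ← hr]
    exact SimpleGraph.card_edgeFinset_le_card_choose_two
  set W := vertsOf E₀ with hWdef
  have hWmem : ∀ a : α, ψ a ∈ W := by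
    intro a
    rw [hψverts]
    exact Finset.mem_image.mpr ⟨a, Finset.mem_univ a, rfl⟩
  have hWpre : ∀ x ∈ W, ∃ a : α, ψ a = x := by
    intro x hx
    rw [hψverts] at hx
    obtain ⟨a, _, ha⟩ := Finset.mem_image.mp hx
    exact ⟨a, ha⟩
  have hWcard : W.card = r := by
    rw [hψverts, Finset.card_image_of_injective _ ψ.injective, Finset.card_univ, hr]
  -- choice of covering copies
  have hchoice : ∀ e : Sym2 V, ∃ E, e ∈ E₀ → (E ∈ 𝓕 ∧ e ∈ E) := by
    intro e
    by_cases he : e ∈ E₀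
    · obtain ⟨E, h1, h2⟩ := hcover e he
      exact ⟨E, fun _ => ⟨h1, h2⟩⟩
    · exact ⟨∅, fun h => absurd h he⟩
  choose cp hcp using hchoice
  set 𝒮 := E₀.image cp with h𝒮def
  have h𝒮sub : 𝒮 ⊆ 𝓕 := by
    intro E hE
    obtain ⟨e, he, rfl⟩ := Finset.mem_image.mp hE
    exact (hcp e he).1
  have hE₀ne : E₀.Nonempty := by
    have : Nonempty α := Fintype.card_pos_iff.mp (by omega)
    obtain ⟨a⟩ := this
    obtain ⟨b, hab⟩ := st14_mindeg hF a
    exact ⟨s(ψ a, ψ b), (hψmem _).mpr ⟨a, b, hab, rfl⟩⟩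
  have h𝒮ne : 𝒮.Nonempty := hE₀ne.image cp
  have hm1 : 1 ≤ 𝒮.card := Finset.card_pos.mpr h𝒮ne
  -- indexing of 𝒮
  obtain ⟨g, hginj, hgmem, hgsurj⟩ : ∃ g : Fin 𝒮.card → Finset (Sym2 V),
      Function.Injective g ∧ (∀ i, g i ∈ 𝒮) ∧ ∀ E ∈ 𝒮, ∃ i, g i = E := by
    refine ⟨fun i => (𝒮.equivFin.symm i : Finset (Sym2 V)),
      fun i j h => 𝒮.equivFin.symm.injective (Subtype.ext h),
      fun i => (𝒮.equivFin.symm i).2, fun E hE => ⟨𝒮.equivFin ⟨E, hE⟩, ?_⟩⟩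
    simp only [Equiv.symm_apply_apply]
  -- per-copy basic facts
  have hcopyi : ∀ E ∈ 𝓕, (vertsOf E).card = r ∧ E.card = s := by
    intro E hE
    obtain ⟨φ, _, hv, hc⟩ := st14_copy_basic hF (hcopies E hE)
    exact ⟨by rw [hv, Finset.card_image_of_injective _ φ.injective, Finset.card_univ, hr],
      by rw [hc, hs]⟩
  have hgE : ∀ i, ∃ e ∈ E₀, e ∈ g i := by
    intro i
    obtain ⟨e, he, hcpe⟩ := Finset.mem_image.mp (hgmem i)
    exact ⟨e, he, hcpe ▸ (hcp e he).2⟩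
  have hcovS : ∀ e ∈ E₀, ∃ i, e ∈ g i := by
    intro e he
    obtain ⟨i, hi⟩ := hgsurj (cp e) (Finset.mem_image_of_mem cp he)
    exact ⟨i, hi ▸ (hcp e he).2⟩
  -- the trace family on α
  set Dα : Fin 𝒮.card → Finset α :=
    fun i => Finset.univ.filter (fun a => ψ a ∈ vertsOf (g i)) with hDαdef
  have hDA : ∀ i (a : α), a ∈ Dα i ↔ ψ a ∈ vertsOf (g i) := by
    intro i a; simp [hDαdef]
  have covα : ∀ a b, F.Adj a b → ∃ i, a ∈ Dα i ∧ b ∈ Dα i := by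
    intro a b hab
    obtain ⟨i, hei⟩ := hcovS s(ψ a, ψ b) ((hψmem _).mpr ⟨a, b, hab, rfl⟩)
    exact ⟨i, (hDA i a).mpr (st14_mem_vertsOf hei (Sym2.mem_mk_left _ _)),
      (hDA i b).mpr (st14_mem_vertsOf hei (Sym2.mem_mk_right _ _))⟩
  have edgeα : ∀ i, ∃ a b, F.Adj a b ∧ a ∈ Dα i ∧ b ∈ Dα i := by
    intro i
    obtain ⟨e, he, hei⟩ := hgE i
    obtain ⟨a, b, hab, rfl⟩ := (hψmem e).mp he
    exact ⟨a, b, hab, (hDA i a).mpr (st14_mem_vertsOf hei (Sym2.mem_mk_left _ _)),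
      (hDA i b).mpr (st14_mem_vertsOf hei (Sym2.mem_mk_right _ _))⟩
  -- at least two copies
  have h2m : 2 ≤ 𝒮.card := by
    by_contra hcon
    push_neg at hcon
    have hc1 : 𝒮.card = 1 := by omega
    obtain ⟨E₁, hE₁⟩ := Finset.card_eq_one.mp hc1
    have hE₁𝓕 : E₁ ∈ 𝓕 := h𝒮sub (hE₁ ▸ Finset.mem_singleton_self E₁)
    have hsub : E₀ ⊆ E₁ := by
      intro e he
      have h1 : cp e ∈ 𝒮 := Finset.mem_image_of_mem cp he
      rw [hE₁, Finset.mem_singleton] at h1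
      exact h1 ▸ (hcp e he).2
    have : E₀ = E₁ := Finset.eq_of_subset_of_card_le hsub
      (by rw [(hcopyi E₁ hE₁𝓕).2, hE₀card])
    exact hnot (this ▸ hE₁𝓕)
  have hms : 𝒮.card ≤ s := hE₀card ▸ Finset.card_image_le
  -- the degree function and connector set
  set dfun : α → ℕ := fun a => (Finset.univ.filter (fun i => a ∈ Dα i)).card with hdfun
  set Sα : Finset α := Finset.univ.filter (fun a => 2 ≤ dfun a) with hSαdef
  have hd1 : ∀ a, 1 ≤ dfun a := by
    intro a
    obtain ⟨b, hab⟩ := st14_mindeg hF a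
    obtain ⟨i, hi, _⟩ := covα a b hab
    exact Finset.card_pos.mpr ⟨i, Finset.mem_filter.mpr ⟨Finset.mem_univ i, hi⟩⟩
  have hSmem : ∀ (a : α) (i j : Fin 𝒮.card), i ≠ j → a ∈ Dα i → a ∈ Dα j → a ∈ Sα := by
    intro a i j hij hi hj
    refine Finset.mem_filter.mpr ⟨Finset.mem_univ a, ?_⟩
    exact Finset.one_lt_card.mpr ⟨i, Finset.mem_filter.mpr ⟨Finset.mem_univ i, hi⟩,
      j, Finset.mem_filter.mpr ⟨Finset.mem_univ j, hj⟩, hij⟩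
  -- each part has at least two connectors
  have hcl : ∀ j, 2 ≤ ((Dα j) ∩ Sα).card := by
    intro j
    refine le_trans (st14_claim2 hF h2m Dα covα edgeα j) (Finset.card_le_card ?_)
    intro w hw
    obtain ⟨hw1, l, hlj, hwl⟩ := Finset.mem_filter.mp hw
    exact Finset.mem_inter.mpr ⟨hw1, hSmem w l j hlj hwl hw1⟩
  -- the A and B families
  set Af : Fin 𝒮.card → Finset V := fun i => vertsOf (g i) ∩ W with hAfdef
  set Bf : Fin 𝒮.card → Finset V := fun i => vertsOf (g i) \ W with hBfdef
  have hAim : ∀ i, Af i = (Dα i).image ψ := by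
    intro i
    ext x
    simp only [hAfdef, Finset.mem_inter, Finset.mem_image]
    constructor
    · rintro ⟨hx1, hx2⟩
      obtain ⟨a, rfl⟩ := hWpre x hx2
      exact ⟨a, (hDA i a).mpr hx1, rfl⟩
    · rintro ⟨a, ha, rfl⟩
      exact ⟨(hDA i a).mp ha, hWmem a⟩
  have hAcard : ∀ i, (Af i).card = (Dα i).card := by
    intro i
    rw [hAim i, Finset.card_image_of_injective _ ψ.injective]
  have hABr : ∀ i, (Dα i).card + (Bf i).card = r := by
    intro i
    rw [← hAcard i, hAfdef, hBfdef]
    rw [Finset.card_inter_add_card_sdiff]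
    exact (hcopyi (g i) (h𝒮sub (hgmem i))).1
  -- the union of the configuration
  have hsupeq : 𝒮.sup vertsOf = W ∪ Finset.univ.biUnion Bf := by
    ext x
    rw [Finset.mem_sup, Finset.mem_union, Finset.mem_biUnion]
    constructor
    · rintro ⟨E, hE, hx⟩
      obtain ⟨i, rfl⟩ := hgsurj E hE
      by_cases hxW : x ∈ W
      · exact Or.inl hxW
      · exact Or.inr ⟨i, Finset.mem_univ i, Finset.mem_sdiff.mpr ⟨hx, hxW⟩⟩
    · rintro (hxW | ⟨i, _, hx⟩)
      · obtain ⟨a, rfl⟩ := hWpre x hxW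
        obtain ⟨b, hab⟩ := st14_mindeg hF a
        obtain ⟨i, hi, _⟩ := covα a b hab
        exact ⟨g i, hgmem i, (hDA i a).mp hi⟩
      · exact ⟨g i, hgmem i, (Finset.mem_sdiff.mp hx).1⟩
  have hdisjWB : Disjoint W (Finset.univ.biUnion Bf) := by
    rw [Finset.disjoint_right]
    intro x hx
    obtain ⟨i, _, hxi⟩ := Finset.mem_biUnion.mp hx
    exact (Finset.mem_sdiff.mp hxi).2
  have hVcard : (𝒮.sup vertsOf).card = r + (Finset.univ.biUnion Bf).card := by
    rw [hsupeq, Finset.card_union_of_disjoint hdisjWB, hWcard]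
  -- ConfigConnected
  have hcc : ConfigConnected 𝒮 := by
    intro u hu v hv
    set rel : V → V → Prop := fun x y => ∃ E ∈ 𝒮, x ∈ vertsOf E ∧ y ∈ vertsOf E with hrel
    have hchainψ : ∀ {a b : α}, F.Walk a b → Relation.ReflTransGen rel (ψ a) (ψ b) := by
      intro a b p
      induction p with
      | nil => exact .refl
      | cons hadj q ih =>
        obtain ⟨i, h1, h2⟩ := covα _ _ hadj
        exact Relation.ReflTransGen.head
          ⟨g i, hgmem i, (hDA i _).mp h1, (hDA i _).mp h2⟩ ih
    rw [Finset.mem_sup] at hu hv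
    obtain ⟨Eu, hEu, hxu⟩ := hu
    obtain ⟨Ev, hEv, hxv⟩ := hv
    obtain ⟨i, rfl⟩ := hgsurj Eu hEu
    obtain ⟨j, rfl⟩ := hgsurj Ev hEv
    obtain ⟨a, _, _, ha, _⟩ := edgeα i
    obtain ⟨b, _, _, hb, _⟩ := edgeα j
    obtain ⟨p⟩ := hFc.preconnected a b
    refine Relation.ReflTransGen.trans (Relation.ReflTransGen.single
      ⟨g i, hgmem i, hxu, (hDA i a).mp ha⟩) ?_
    exact Relation.ReflTransGen.trans (hchainψ p)
      (Relation.ReflTransGen.single ⟨g j, hgmem j, (hDA j b).mp hb, hxv⟩)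
  -- no avoidable configuration gives nullity at most one
  have hnull : ((r : ℤ) - 1) * 𝒮.card + 1 - ((𝒮.sup vertsOf).card : ℤ) ≤ 1 := by
    by_contra hcon
    push_neg at hcon
    refine hav ⟨𝒮, h𝒮sub, h𝒮ne, hcc, ?_, by linarith⟩
    calc 𝒮.card ≤ s := hms
      _ ≤ r.choose 2 := hsr
      _ ≤ 2 * r.choose 2 := by omega
  -- counting: lower bound on the total trace size
  have hZdef : ∑ i, (Dα i ∩ Sα).card = ∑ a ∈ Sα, dfun a := st14_dcount Dα Sα
  have hTdef : ∑ i, (Dα i).card = ∑ a : α, dfun a := by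
    have h := st14_dcount Dα Finset.univ
    simp only [Finset.inter_univ] at h
    exact h
  have hZ2m : 2 * 𝒮.card ≤ ∑ a ∈ Sα, dfun a := by
    rw [← hZdef]
    calc 2 * 𝒮.card = ∑ _i : Fin 𝒮.card, 2 := by
          rw [Finset.sum_const, Finset.card_univ, Fintype.card_fin, smul_eq_mul, mul_comm]
      _ ≤ ∑ i, (Dα i ∩ Sα).card := Finset.sum_le_sum (fun i _ => hcl i)
  have hZ2k : 2 * Sα.card ≤ ∑ a ∈ Sα, dfun a := by
    calc 2 * Sα.card = ∑ _a ∈ Sα, 2 := by rw [Finset.sum_const, smul_eq_mul, mul_comm]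
      _ ≤ ∑ a ∈ Sα, dfun a :=
          Finset.sum_le_sum (fun a ha => (Finset.mem_filter.mp ha).2)
  have hoff : (Finset.univ \ Sα).card ≤ ∑ a ∈ Finset.univ \ Sα, dfun a := by
    calc (Finset.univ \ Sα).card = ∑ _a ∈ Finset.univ \ Sα, 1 := by
          rw [Finset.sum_const, smul_eq_mul, mul_one]
      _ ≤ _ := Finset.sum_le_sum (fun a _ => hd1 a)
  have hsplitsum : ∑ a ∈ Finset.univ \ Sα, dfun a + ∑ a ∈ Sα, dfun a = ∑ a : α, dfun a :=
    Finset.sum_sdiff (Finset.subset_univ Sα)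
  have hkk' : Sα.card + (Finset.univ \ Sα).card = r := by
    rw [Finset.card_sdiff_of_subset (Finset.subset_univ Sα), Finset.card_univ, hr]
    have := Finset.card_le_card (Finset.subset_univ Sα)
    rw [Finset.card_univ, hr] at this
    omega
  have hXge : r + 𝒮.card ≤ ∑ i, (Dα i).card := by
    rw [hTdef]
    omega
  -- counting: upper bound via the no-avoidable-configuration property
  have hsumAB : ∑ i, (Dα i).card + ∑ i, (Bf i).card = 𝒮.card * r := by
    rw [← Finset.sum_add_distrib]
    calc ∑ i, ((Dα i).card + (Bf i).card) = ∑ _i : Fin 𝒮.card, r :=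
          Finset.sum_congr rfl (fun i _ => hABr i)
      _ = 𝒮.card * r := by
          rw [Finset.sum_const, Finset.card_univ, Fintype.card_fin, smul_eq_mul]
  have hUle : (Finset.univ.biUnion Bf).card ≤ ∑ i, (Bf i).card := Finset.card_biUnion_le
  have hring : ((r : ℤ) - 1) * (𝒮.card : ℤ) = (𝒮.card : ℤ) * r - 𝒮.card := by ring
  have hVZ : ((𝒮.sup vertsOf).card : ℤ) = (r : ℤ) + ((Finset.univ.biUnion Bf).card : ℤ) := by
    exact_mod_cast hVcard
  have hsumABZ : ((∑ i, (Dα i).card : ℕ) : ℤ) + ((∑ i, (Bf i).card : ℕ) : ℤ)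
      = (𝒮.card : ℤ) * r := by exact_mod_cast hsumAB
  have hUleZ : ((Finset.univ.biUnion Bf).card : ℤ) ≤ ((∑ i, (Bf i).card : ℕ) : ℤ) :=
    Int.ofNat_le.mpr hUle
  have hXgeZ : (r : ℤ) + 𝒮.card ≤ ((∑ i, (Dα i).card : ℕ) : ℤ) := by exact_mod_cast hXge
  have hXeq : ∑ i, (Dα i).card = r + 𝒮.card := by
    have hle : ((∑ i, (Dα i).card : ℕ) : ℤ) ≤ (r : ℤ) + 𝒮.card := by linarith
    have := le_antisymm (by exact_mod_cast hle) hXge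
    omega
  have hUeq : (Finset.univ.biUnion Bf).card = ∑ i, (Bf i).card := by
    have hge : ((∑ i, (Bf i).card : ℕ) : ℤ) ≤ ((Finset.univ.biUnion Bf).card : ℤ) := by
      have hXeqZ : ((∑ i, (Dα i).card : ℕ) : ℤ) = (r : ℤ) + 𝒮.card := by exact_mod_cast hXeq
      linarith
    exact le_antisymm hUle (by exact_mod_cast hge)
  -- equality extraction for the connector structure
  have hTeq : ∑ a : α, dfun a = r + 𝒮.card := by rw [← hTdef]; exact hXeq
  have hZk : ∑ a ∈ Sα, dfun a = 2 * 𝒮.card ∧ Sα.card = 𝒮.card ∧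
      ∑ a ∈ Finset.univ \ Sα, dfun a = (Finset.univ \ Sα).card := by
    omega
  have hpart2 : ∀ i, (Dα i ∩ Sα).card = 2 := by
    have htot : ∑ i, (Dα i ∩ Sα).card = (Finset.univ : Finset (Fin 𝒮.card)).card * 2 := by
      rw [hZdef, hZk.1, Finset.card_univ, Fintype.card_fin, mul_comm]
    exact fun i => st14_forced_eq Finset.univ _ 2 (fun i _ => hcl i) htot i (Finset.mem_univ i)
  have hd2S : ∀ a ∈ Sα, (Finset.univ.filter (fun i => a ∈ Dα i)).card = 2 := by
    have htot : ∑ a ∈ Sα, dfun a = Sα.card * 2 := by rw [hZk.1, hZk.2.1, mul_comm]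
    exact st14_forced_eq Sα dfun 2 (fun a ha => (Finset.mem_filter.mp ha).2) htot
  -- disjointness of the outside parts
  have hBdisj : ∀ i j, i ≠ j → Disjoint (Bf i) (Bf j) := st14_disj_of_card Bf hUeq
  -- connectivity of the part structure
  have hconnS : ∀ i j, Relation.ReflTransGen
      (fun i j => ∃ a, a ∈ Sα ∧ a ∈ Dα i ∧ a ∈ Dα j) i j := by
    intro i j
    refine st14_rtg_or ?_ (st14_partconn hFc Dα covα (fun i => ?_) i j)
    · intro i j ⟨w, hwi, hwj⟩
      rcases eq_or_ne i j with rfl | hij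
      · exact Or.inl rfl
      · exact Or.inr ⟨w, hSmem w i j hij hwi hwj, hwi, hwj⟩
    · obtain ⟨a, _, _, ha, _⟩ := edgeα i
      exact ⟨a, ha⟩
  -- the clean cycle
  haveI : NeZero 𝒮.card := ⟨by omega⟩
  obtain ⟨q0, c0, hqbij, hcinj, hcS, hcpair⟩ :=
    cycle_structure h2m Dα Sα hd2S hpart2 hconnS
  have hcin : ∀ t, c0 t ∈ Dα (q0 t) ∧ c0 (t + 1) ∈ Dα (q0 t) := by
    intro t
    have h := hcpair t
    constructor
    · exact (Finset.mem_inter.mp (by rw [h]; exact Finset.mem_insert_self _ _)).1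
    · exact (Finset.mem_inter.mp
        (by rw [h]; exact Finset.mem_insert_of_mem (Finset.mem_singleton_self _))).1
  have hcVne : ∀ t, ψ (c0 t) ≠ ψ (c0 (t + 1)) := by
    intro t
    exact fun h => (st14_fin_succ_ne h2m t) (hcinj (ψ.injective h)).symm
  have hcVmem : ∀ t, ψ (c0 t) ∈ vertsOf (g (q0 t)) ∧ ψ (c0 (t + 1)) ∈ vertsOf (g (q0 t)) :=
    fun t => ⟨(hDA _ _).mp (hcin t).1, (hDA _ _).mp (hcin t).2⟩
  refine ⟨𝒮.card, h2m, hms, Finset.image (fun t => vertsOf (g (q0 t))) Finset.univ, ?_, ?_, ?_⟩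
  · -- IsCleanCycle
    refine ⟨fun t => ψ (c0 t), fun t => vertsOf (g (q0 t)) \ {ψ (c0 t), ψ (c0 (t + 1))},
      fun t1 t2 h => hcinj (ψ.injective h), ?_, ?_, ?_, ?_⟩
    · intro t
      show (vertsOf (g (q0 t)) \ {ψ (c0 t), ψ (c0 (t + 1))}).card = r - 2
      rw [Finset.card_sdiff_of_subset (by
        intro x hx
        rcases Finset.mem_insert.mp hx with rfl | hx
        · exact (hcVmem t).1
        · rw [Finset.mem_singleton.mp hx]; exact (hcVmem t).2)]
      rw [Finset.card_pair (hcVne t), (hcopyi (g (q0 t)) (h𝒮sub (hgmem (q0 t)))).1]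
    · intro t1 t2 hne
      show Disjoint (vertsOf (g (q0 t1)) \ {ψ (c0 t1), ψ (c0 (t1 + 1))})
        (vertsOf (g (q0 t2)) \ {ψ (c0 t2), ψ (c0 (t2 + 1))})
      rw [Finset.disjoint_left]
      intro x hx1 hx2
      rw [Finset.mem_sdiff] at hx1 hx2
      have hqne : q0 t1 ≠ q0 t2 := fun h => hne (hqbij.1 h)
      by_cases hxW : x ∈ W
      · obtain ⟨a, rfl⟩ := hWpre x hxW
        have ha1 : a ∈ Dα (q0 t1) := (hDA _ _).mpr hx1.1
        have ha2 : a ∈ Dα (q0 t2) := (hDA _ _).mpr hx2.1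
        have haS : a ∈ Sα := hSmem a _ _ hqne ha1 ha2
        have : a ∈ Dα (q0 t1) ∩ Sα := Finset.mem_inter.mpr ⟨ha1, haS⟩
        rw [hcpair t1] at this
        rcases Finset.mem_insert.mp this with rfl | ha
        · exact hx1.2 (Finset.mem_insert_self _ _)
        · rw [Finset.mem_singleton.mp ha] at hx1
          exact hx1.2 (Finset.mem_insert_of_mem (Finset.mem_singleton_self _))
      · have hb1 : x ∈ Bf (q0 t1) := Finset.mem_sdiff.mpr ⟨hx1.1, hxW⟩
        have hb2 : x ∈ Bf (q0 t2) := Finset.mem_sdiff.mpr ⟨hx2.1, hxW⟩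
        exact Finset.disjoint_left.mp (hBdisj _ _ hqne) hb1 hb2
    · intro i j
      show ψ (c0 i) ∉ vertsOf (g (q0 j)) \ {ψ (c0 j), ψ (c0 (j + 1))}
      intro hmem
      rw [Finset.mem_sdiff] at hmem
      have hci : c0 i ∈ Dα (q0 j) := (hDA _ _).mpr hmem.1
      have : c0 i ∈ Dα (q0 j) ∩ Sα := Finset.mem_inter.mpr ⟨hci, hcS i⟩
      rw [hcpair j] at this
      rcases Finset.mem_insert.mp this with h | h
      · exact hmem.2 (by rw [h]; exact Finset.mem_insert_self _ _)
      · rw [Finset.mem_singleton] at h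
        exact hmem.2 (by rw [h]; exact Finset.mem_insert_of_mem (Finset.mem_singleton_self _))
    · apply Finset.image_congr
      intro t _
      have hidx : (⟨((t : ℕ) + 1) % 𝒮.card, Nat.mod_lt _ t.pos⟩ : Fin 𝒮.card) = t + 1 :=
        Fin.ext (by rw [st14_fin_add_one_val h2m])
      show vertsOf (g (q0 t)) = insert (ψ (c0 t))
        (insert (ψ (c0 (⟨((t : ℕ) + 1) % 𝒮.card, Nat.mod_lt _ t.pos⟩ : Fin 𝒮.card)))
          (vertsOf (g (q0 t)) \ {ψ (c0 t), ψ (c0 (t + 1))}))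
      rw [hidx]
      exact (st14_insert_pair (hcVmem t).1 (hcVmem t).2).symm
  · -- every hyperedge is the vertex set of a copy
    intro h hh
    obtain ⟨t, _, rfl⟩ := Finset.mem_image.mp hh
    exact ⟨g (q0 t), h𝒮sub (hgmem (q0 t)), rfl⟩
  · -- every edge of E₀ is inside a hyperedge of the cycle
    intro e he
    obtain ⟨i, hei⟩ := hcovS e he
    obtain ⟨t, rfl⟩ := hqbij.2 i
    refine ⟨vertsOf (g (q0 t)), Finset.mem_image.mpr ⟨t, Finset.mem_univ t, rfl⟩, ?_⟩
    intro x hx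
    exact st14_mem_vertsOf hei hx
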